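/- arXiv:0802.0953 — 3 statements merged into one kernel-verified Lean document; each statement's English description precedes it below -/
import Mathlib

section
/- Let p be prime and k ≥ 1. A Laurent polynomial F(X) = Σ_{i=l}^r λ_i X^i over Z_{p^k} is a unit in the Laurent polynomial ring if and only if there exists exactly one index j with l ≤ j ≤ r such that gcd(λ_j, p) = 1 (equivalently, λ_j is a unit in Z_{p^k} and p divides λ_i for all i ≠ j). -/
open LaurentPolynomial

section Aux

lemma laurent_coeff_mul_max' {K : Type*} [CommSemiring K] (f g : LaurentPolynomial K)
    (hf : f.coeff.support.Nonempty) (hg : g.coeff.support.Nonempty) :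
    (f * g).coeff (f.coeff.support.max' hf + g.coeff.support.max' hg)
      = f.coeff (f.coeff.support.max' hf) * g.coeff (g.coeff.support.max' hg) := by
  classical
  set A := f.coeff.support.max' hf with hA
  set B := g.coeff.support.max' hg with hB
  rw [AddMonoidAlgebra.coeff_mul]
  simp only [Finsupp.sum]
  rw [Finset.sum_eq_single A]
  · rw [Finset.sum_eq_single B]
    · rw [if_pos rfl]
    · intro b hb hne
      have hb' : b < B := lt_of_le_of_ne (Finset.le_max' _ _ hb) hne
      rw [if_neg (by omega)]
    · intro h; exact absurd (g.coeff.support.max'_mem hg) h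
  · intro a ha hne
    have ha' : a < A := lt_of_le_of_ne (Finset.le_max' _ _ ha) hne
    refine Finset.sum_eq_zero fun b hb => ?_
    have hb' : b ≤ B := Finset.le_max' _ _ hb
    rw [if_neg (by omega)]
  · intro h; exact absurd (f.coeff.support.max'_mem hf) h

lemma laurent_unit_single_coeff {K : Type*} [Field K] {f : LaurentPolynomial K}
    (h : IsUnit f) : ∃ n : ℤ, f.coeff n ≠ 0 ∧ ∀ m : ℤ, m ≠ n → f.coeff m = 0 := by
  classical
  obtain ⟨g, hfg⟩ := h.exists_right_inv
  have hf : f ≠ 0 := by rintro rfl; rw [zero_mul] at hfg; exact zero_ne_one hfg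
  have hg : g ≠ 0 := by rintro rfl; rw [mul_zero] at hfg; exact zero_ne_one hfg
  have key : ∀ (f g : LaurentPolynomial K) (hfs : f.coeff.support.Nonempty)
      (hgs : g.coeff.support.Nonempty), f * g = 1 →
      f.coeff.support.max' hfs + g.coeff.support.max' hgs = 0 := by
    intro f g hfs hgs hfg
    have h1 := laurent_coeff_mul_max' f g hfs hgs
    rw [hfg] at h1
    have h2 : f.coeff (f.coeff.support.max' hfs) * g.coeff (g.coeff.support.max' hgs) ≠ 0 :=
      mul_ne_zero (Finsupp.mem_support_iff.mp (f.coeff.support.max'_mem hfs))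
        (Finsupp.mem_support_iff.mp (g.coeff.support.max'_mem hgs))
    rw [← h1] at h2
    by_contra hne
    rw [AddMonoidAlgebra.one_def, AddMonoidAlgebra.coeff_single, Finsupp.single_apply,
      if_neg (fun he => hne he.symm)] at h2
    exact h2 rfl
  have hfs : f.coeff.support.Nonempty :=
    Finsupp.support_nonempty_iff.mpr (AddMonoidAlgebra.coeff_eq_zero.not.mpr hf)
  have hgs : g.coeff.support.Nonempty :=
    Finsupp.support_nonempty_iff.mpr (AddMonoidAlgebra.coeff_eq_zero.not.mpr hg)
  have hif : (invert f : LaurentPolynomial K) ≠ 0 := fun h0 =>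
    hf ((invert (R := K)).injective (by rw [h0, map_zero]))
  have hig : (invert g : LaurentPolynomial K) ≠ 0 := fun h0 =>
    hg ((invert (R := K)).injective (by rw [h0, map_zero]))
  have hifs : (invert f : LaurentPolynomial K).coeff.support.Nonempty :=
    Finsupp.support_nonempty_iff.mpr (AddMonoidAlgebra.coeff_eq_zero.not.mpr hif)
  have higs : (invert g : LaurentPolynomial K).coeff.support.Nonempty :=
    Finsupp.support_nonempty_iff.mpr (AddMonoidAlgebra.coeff_eq_zero.not.mpr hig)
  have hifg : (invert f : LaurentPolynomial K) * invert g = 1 := by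
    rw [← map_mul, hfg, map_one]
  have hAB := key f g hfs hgs hfg
  have hA'B' := key (invert f) (invert g) hifs higs hifg
  set A := f.coeff.support.max' hfs with hA
  set A' := (invert f : LaurentPolynomial K).coeff.support.max' hifs with hA'
  -- every element of f.support is ≥ -A'
  have hmin : ∀ c ∈ f.coeff.support, -A' ≤ c := by
    intro c hc
    have : (-c) ∈ (invert f : LaurentPolynomial K).coeff.support := by
      rw [Finsupp.mem_support_iff, invert_apply, neg_neg]
      exact Finsupp.mem_support_iff.mp hc
    have := Finset.le_max' _ _ this
    omega
  have hBmin : ∀ c ∈ g.coeff.support,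
      -((invert g : LaurentPolynomial K).coeff.support.max' higs) ≤ c := by
    intro c hc
    have : (-c) ∈ (invert g : LaurentPolynomial K).coeff.support := by
      rw [Finsupp.mem_support_iff, invert_apply, neg_neg]
      exact Finsupp.mem_support_iff.mp hc
    have := Finset.le_max' _ _ this
    omega
  -- A = -A'
  have hAeq : A = -A' := by
    have h1 : -A' ≤ A := hmin A (f.coeff.support.max'_mem hfs)
    have h2 : -((invert g : LaurentPolynomial K).coeff.support.max' higs) ≤
        g.coeff.support.max' hgs := hBmin _ (g.coeff.support.max'_mem hgs)
    omega
  refine ⟨A, Finsupp.mem_support_iff.mp (f.coeff.support.max'_mem hfs), fun m hm => ?_⟩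
  by_contra hm0
  have hmem : m ∈ f.coeff.support := Finsupp.mem_support_iff.mpr hm0
  have h1 : m ≤ A := Finset.le_max' _ _ hmem
  have h2 : -A' ≤ m := hmin m hmem
  omega

end Aux

/-- A Laurent polynomial `F = Σ_{i=l}^r λ_i X^i` over `Z_{p^k}` is a unit iff there is
exactly one index `j ∈ [l, r]` with `λ_j` a unit of `Z_{p^k}` and `p ∣ λ_i` for all
other indices `i`. -/
theorem laurent_unit_iff_unique_unit_coeff (p : ℕ) (hp : p.Prime) (k : ℕ) (hk : 1 ≤ k)
    (l r : ℤ) (hlr : l ≤ r) (lam : ℤ → ZMod (p ^ k))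
    (F : LaurentPolynomial (ZMod (p ^ k)))
    (hF : F = ∑ i ∈ Finset.Icc l r, LaurentPolynomial.C (lam i) * T i) :
    IsUnit F ↔
      ∃! j : ℤ, j ∈ Finset.Icc l r ∧ IsUnit (lam j) ∧
        ∀ i ∈ Finset.Icc l r, i ≠ j → (p : ZMod (p ^ k)) ∣ lam i := by
  classical
  have hk0 : k ≠ 0 := by omega
  haveI : Fact p.Prime := ⟨hp⟩
  haveI : NeZero (p ^ k) := ⟨pow_ne_zero k hp.ne_zero⟩
  set φ : ZMod (p ^ k) →+* ZMod p := ZMod.castHom (dvd_pow_self p hk0) (ZMod p) with hφ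
  have hphi_val : ∀ x : ZMod (p ^ k), φ x = ((x.val : ℕ) : ZMod p) := by
    intro x
    conv_lhs => rw [← ZMod.natCast_rightInverse x]
    rw [map_natCast]
  have hzero : ∀ x : ZMod (p ^ k), φ x = 0 ↔ (p : ZMod (p ^ k)) ∣ x := by
    intro x
    constructor
    · intro h
      rw [hphi_val, ZMod.natCast_eq_zero_iff] at h
      obtain ⟨c, hc⟩ := h
      refine ⟨(c : ZMod (p ^ k)), ?_⟩
      have hx : ((x.val : ℕ) : ZMod (p ^ k)) = x := ZMod.natCast_rightInverse x
      rw [← hx, hc]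
      push_cast
      ring
    · rintro ⟨y, rfl⟩
      rw [map_mul, map_natCast, ZMod.natCast_self, zero_mul]
  have hunit : ∀ x : ZMod (p ^ k), φ x ≠ 0 → IsUnit x := by
    intro x h
    rw [hphi_val, Ne, ZMod.natCast_eq_zero_iff] at h
    have hcop : Nat.Coprime x.val (p ^ k) :=
      ((Nat.Prime.coprime_iff_not_dvd hp).mpr h).symm.pow_right k
    have := (ZMod.isUnit_iff_coprime x.val (p ^ k)).mpr hcop
    rwa [ZMod.natCast_rightInverse x] at this
  -- the reduction homomorphism on Laurent polynomials
  set Tm : Multiplicative ℤ →* LaurentPolynomial (ZMod p) :=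
    { toFun := fun n => T (Multiplicative.toAdd n)
      map_one' := T_zero
      map_mul' := fun x y => T_add (Multiplicative.toAdd x) (Multiplicative.toAdd y) } with hTm
  set ψ : LaurentPolynomial (ZMod (p ^ k)) →+* LaurentPolynomial (ZMod p) :=
    AddMonoidAlgebra.liftNCRingHom (LaurentPolynomial.C.comp φ) Tm
      (fun x y => Commute.all _ _) with hψ
  have hψsingle : ∀ (i : ℤ) (a : ZMod (p ^ k)),
      ψ (AddMonoidAlgebra.single i a) = AddMonoidAlgebra.single i (φ a) := by
    intro i a
    have h1 : ψ (AddMonoidAlgebra.single i a) = LaurentPolynomial.C (φ a) * T i := by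
      show AddMonoidAlgebra.liftNC _ _ (AddMonoidAlgebra.single i a) = _
      rw [AddMonoidAlgebra.liftNC_single]
      rfl
    rw [h1]
    exact (single_eq_C_mul_T (φ a) i).symm
  have hψF : ψ F = ∑ i ∈ Finset.Icc l r, AddMonoidAlgebra.single i (φ (lam i)) := by
    rw [hF, map_sum]
    refine Finset.sum_congr rfl fun i _ => ?_
    rw [← single_eq_C_mul_T, hψsingle]
  have hcoeff : ∀ m : ℤ, (ψ F).coeff m = if m ∈ Finset.Icc l r then φ (lam m) else 0 := by
    intro m
    rw [hψF, AddMonoidAlgebra.coeff_sum, Finset.sum_apply']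
    simp_rw [AddMonoidAlgebra.coeff_single, Finsupp.single_apply]
    exact Finset.sum_ite_eq' (Finset.Icc l r) m (fun i => φ (lam i))
  constructor
  · intro hU
    obtain ⟨n, hn0, hn⟩ := laurent_unit_single_coeff (hU.map ψ)
    have hnIcc : n ∈ Finset.Icc l r := by
      by_contra h
      rw [hcoeff n, if_neg h] at hn0
      exact hn0 rfl
    have hn0' : φ (lam n) ≠ 0 := by rwa [hcoeff n, if_pos hnIcc] at hn0
    have hPn : n ∈ Finset.Icc l r ∧ IsUnit (lam n) ∧
        ∀ i ∈ Finset.Icc l r, i ≠ n → (p : ZMod (p ^ k)) ∣ lam i := by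
      refine ⟨hnIcc, hunit _ hn0', fun i hi hin => ?_⟩
      have := hn i hin
      rw [hcoeff i, if_pos hi] at this
      exact (hzero _).mp this
    refine ⟨n, hPn, ?_⟩
    rintro y ⟨hy, hyu, -⟩
    by_contra hyn
    have hdvd : (p : ZMod (p ^ k)) ∣ lam y := hPn.2.2 y hy hyn
    have h0 : φ (lam y) = 0 := (hzero _).mpr hdvd
    have hu : IsUnit (φ (lam y)) := hyu.map φ
    rw [h0] at hu
    exact not_isUnit_zero hu
  · rintro ⟨j, ⟨hj, hju, hjd⟩, -⟩
    have hUnit1 : IsUnit (LaurentPolynomial.C (lam j) * T j) :=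
      (hju.map LaurentPolynomial.C).mul (isUnit_T j)
    have hdvdN : (LaurentPolynomial.C ((p : ZMod (p ^ k)))) ∣
        ∑ i ∈ (Finset.Icc l r).erase j, LaurentPolynomial.C (lam i) * T i := by
      refine Finset.dvd_sum fun i hi => ?_
      obtain ⟨c, hc⟩ := hjd i (Finset.mem_of_mem_erase hi) (Finset.ne_of_mem_erase hi)
      exact ⟨LaurentPolynomial.C c * T i, by rw [hc, map_mul, mul_assoc]⟩
    obtain ⟨M, hM⟩ := hdvdN
    have hnil : IsNilpotent
        (∑ i ∈ (Finset.Icc l r).erase j, LaurentPolynomial.C (lam i) * T i) := by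
      refine ⟨k, ?_⟩
      rw [hM, mul_pow, ← map_pow]
      have hpk : ((p : ZMod (p ^ k))) ^ k = 0 := by
        rw [← Nat.cast_pow, ZMod.natCast_self]
      rw [hpk, map_zero, zero_mul]
    have hsplit : F = LaurentPolynomial.C (lam j) * T j +
        ∑ i ∈ (Finset.Icc l r).erase j, LaurentPolynomial.C (lam i) * T i := by
      rw [hF, ← Finset.add_sum_erase _ _ hj]
    rw [hsplit]
    exact hnil.isUnit_add_left_of_commute hUnit1 (Commute.all _ _)
end

section
/- Let m ≥ 2 have prime factorization m = p_1^{k_1}···p_h^{k_h}. A Laurent polynomial F(X) = Σ_{i=l}^r λ_i X^i over Z_m is a unit in the Laurent polynomial ring over Z_m if and only if for each prime factor p_s of m there exists exactly one index j (depending on s) with gcd(λ_j, p_s) = 1 and p_s dividing λ_i for all i ≠ j. -/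
open LaurentPolynomial

section Helpers

/-- The ring hom on Laurent polynomials induced by a ring hom on coefficients. -/
noncomputable def lmap {R S : Type*} [CommSemiring R] [CommSemiring S] (f : R →+* S) :
    LaurentPolynomial R →+* LaurentPolynomial S :=
  AddMonoidAlgebra.liftNCRingHom
    ((LaurentPolynomial.C (R := S)).comp f)
    { toFun := fun n => T (Multiplicative.toAdd n),
      map_one' := T_zero,
      map_mul' := fun _ _ => T_add _ _ }
    (fun _ _ => Commute.all _ _)

theorem lmap_single {R S : Type*} [CommSemiring R] [CommSemiring S] (f : R →+* S)
    (n : ℤ) (a : R) :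
    lmap f (AddMonoidAlgebra.single n a) = AddMonoidAlgebra.single n (f a) := by
  show AddMonoidAlgebra.liftNC _ _ _ = _
  rw [AddMonoidAlgebra.liftNC_single]
  simp [single_eq_C_mul_T]

theorem lmap_C_mul_T {R S : Type*} [CommSemiring R] [CommSemiring S] (f : R →+* S)
    (n : ℤ) (a : R) :
    lmap f (C a * T n) = C (f a) * T n := by
  rw [← single_eq_C_mul_T, lmap_single, single_eq_C_mul_T]

theorem lmap_apply {R S : Type*} [CommSemiring R] [CommSemiring S] (f : R →+* S)
    (F : LaurentPolynomial R) (k : ℤ) : (lmap f F).coeff k = f (F.coeff k) := by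
  induction F using AddMonoidAlgebra.induction_linear with
  | zero => simp
  | add a b ha hb => rw [map_add, AddMonoidAlgebra.coeff_add, AddMonoidAlgebra.coeff_add, Finsupp.add_apply, Finsupp.add_apply, ha, hb, map_add]
  | single n a =>
      rw [lmap_single, AddMonoidAlgebra.coeff_single, AddMonoidAlgebra.coeff_single, Finsupp.single_apply, Finsupp.single_apply]
      split_ifs
      · rfl
      · rw [map_zero]

theorem zmod_nilpotent {m : ℕ} (hm : 2 ≤ m) (a : ZMod m)
    (h : ∀ p ∈ m.primeFactors, (a.val : ZMod p) = 0) : IsNilpotent a := by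
  haveI : NeZero m := ⟨by omega⟩
  have hm0 : m ≠ 0 := by omega
  refine ⟨m, ?_⟩
  have hva : ((a.val : ℕ) : ZMod m) = a := ZMod.natCast_rightInverse a
  rw [← hva, ← Nat.cast_pow, ZMod.natCast_eq_zero_iff]
  rcases eq_or_ne a.val 0 with hv | hv
  · rw [hv, zero_pow hm0]; exact dvd_zero m
  · rw [← Nat.factorization_le_iff_dvd hm0 (pow_ne_zero m hv), Finsupp.le_def]
    intro p
    rcases em (p ∈ m.primeFactors) with hp | hp
    · have hprime := Nat.prime_of_mem_primeFactors hp
      have hdvd : p ∣ a.val := by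
        have := h p hp
        rwa [ZMod.natCast_eq_zero_iff] at this
      have h1 : 1 ≤ a.val.factorization p :=
        (hprime.factorization_pos_of_dvd hv hdvd)
      calc m.factorization p ≤ m := (Nat.factorization_lt p hm0).le
        _ = m * 1 := (mul_one m).symm
        _ ≤ m * a.val.factorization p := Nat.mul_le_mul_left m h1
        _ = (a.val ^ m).factorization p := by rw [Nat.factorization_pow]; rfl
    · have : m.factorization p = 0 := by
        simp [Nat.factorization_eq_zero_iff]
        rcases em (p.Prime) with hpr | hpr
        · rcases em (p ∣ m) with hd | hd
          · exact absurd (Nat.mem_primeFactors.mpr ⟨hpr, hd, hm0⟩) hp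
          · tauto
        · tauto
      simp [this]

theorem laurent_nilpotent {R : Type*} [CommRing R] (F : LaurentPolynomial R)
    (h : ∀ k : ℤ, IsNilpotent (F.coeff k)) : IsNilpotent F := by
  rw [← mem_nilradical]
  have : F = ∑ k ∈ F.coeff.support, AddMonoidAlgebra.single k (F.coeff k) := by
    conv_lhs => rw [← AddMonoidAlgebra.sum_coeff_single F]
    rfl
  rw [this]
  refine Ideal.sum_mem _ fun k _ => ?_
  rw [mem_nilradical]
  obtain ⟨n, hn⟩ := h k
  exact ⟨n, by rw [single_eq_C_mul_T, mul_pow, ← map_pow, hn, map_zero, zero_mul]⟩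

open Polynomial in
theorem poly_monomial_of_mul_eq_X_pow {K : Type*} [Field K] {f g : K[X]} {N : ℕ}
    (h : f * g = X ^ N) : ∃ (d : ℕ) (c : K), c ≠ 0 ∧ f = Polynomial.C c * X ^ d := by
  have hX : (X ^ N : K[X]) ≠ 0 := pow_ne_zero _ X_ne_zero
  have hf : f ≠ 0 := fun hf => hX (by rw [← h, hf, zero_mul])
  have hg : g ≠ 0 := fun hg => hX (by rw [← h, hg, mul_zero])
  have hdeg : f.natDegree + g.natDegree = N := by
    rw [← natDegree_mul hf hg, h, natDegree_X_pow]
  have htdeg : f.natTrailingDegree + g.natTrailingDegree = N := by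
    rw [← natTrailingDegree_mul hf hg, h, natTrailingDegree_X_pow]
  have h1 : f.natTrailingDegree = f.natDegree := by
    have := f.natTrailingDegree_le_natDegree
    have := g.natTrailingDegree_le_natDegree
    omega
  refine ⟨f.natDegree, f.coeff f.natDegree, ?_, ?_⟩
  · rw [← leadingCoeff]; exact leadingCoeff_ne_zero.mpr hf
  · ext i
    rcases lt_trichotomy i f.natDegree with hi | rfl | hi
    · rw [coeff_eq_zero_of_lt_natTrailingDegree (by omega), coeff_C_mul, coeff_X_pow,
        if_neg hi.ne, mul_zero]
    · simp
    · rw [coeff_eq_zero_of_natDegree_lt hi, coeff_C_mul, coeff_X_pow,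
        if_neg hi.ne', mul_zero]

open Polynomial in
theorem laurent_unit_structure {K : Type*} [Field K] {F : LaurentPolynomial K}
    (h : IsUnit F) : ∃ (n : ℤ) (a : K), a ≠ 0 ∧ F = LaurentPolynomial.C a * T n := by
  obtain ⟨u, rfl⟩ := h
  obtain ⟨n, f, hf⟩ := exists_T_pow (u : LaurentPolynomial K)
  obtain ⟨n', g, hg⟩ := exists_T_pow ((↑u⁻¹ : LaurentPolynomial K))
  have key : f * g = X ^ (n + n') := by
    apply Polynomial.toLaurent_injective
    rw [map_mul, hf, hg, Polynomial.toLaurent_X_pow, mul_mul_mul_comm, Units.mul_inv,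
      one_mul, ← T_add]
    norm_cast
  obtain ⟨d, c, hc, hfc⟩ := poly_monomial_of_mul_eq_X_pow key
  refine ⟨(d : ℤ) - n, c, hc, ?_⟩
  have : (↑u : LaurentPolynomial K) = Polynomial.toLaurent f * T (-n) := by
    rw [hf, mul_T_assoc, add_neg_cancel, T_zero, mul_one]
  rw [this, hfc, map_mul, Polynomial.toLaurent_C, Polynomial.toLaurent_X_pow, mul_T_assoc,
    sub_eq_add_neg]

end Helpers

/-- A Laurent polynomial `F = Σ_{i=l}^r λ_i X^i` over `Z_m` is a unit iff for each prime
factor `p` of `m` there is exactly one index `j ∈ [l, r]` whose coefficient is coprime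
to `p` (its image in `ZMod p` is a unit), all other coefficients being divisible by `p`. -/
theorem laurent_unit_iff_prime_factors (m : ℕ) (hm : 2 ≤ m)
    (l r : ℤ) (hlr : l ≤ r) (lam : ℤ → ZMod m)
    (F : LaurentPolynomial (ZMod m))
    (hF : F = ∑ i ∈ Finset.Icc l r, LaurentPolynomial.C (lam i) * T i) :
    IsUnit F ↔
      ∀ p, ∀ hp : p ∈ m.primeFactors,
        ∃! j : ℤ, j ∈ Finset.Icc l r ∧
          IsUnit (ZMod.castHom (Nat.dvd_of_mem_primeFactors hp) (ZMod p) (lam j)) ∧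
          ∀ i ∈ Finset.Icc l r, i ≠ j →
            ZMod.castHom (Nat.dvd_of_mem_primeFactors hp) (ZMod p) (lam i) = 0 := by
  haveI : NeZero m := ⟨by omega⟩
  have hm0 : m ≠ 0 := by omega
  constructor
  · -- forward direction
    intro hU p hp
    haveI : Fact p.Prime := ⟨Nat.prime_of_mem_primeFactors hp⟩
    set π := ZMod.castHom (Nat.dvd_of_mem_primeFactors hp) (ZMod p) with hπdef
    have hψF : lmap π F = ∑ i ∈ Finset.Icc l r, AddMonoidAlgebra.single i (π (lam i)) := by
      rw [hF, map_sum]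
      exact Finset.sum_congr rfl fun i _ => by rw [lmap_C_mul_T, single_eq_C_mul_T]
    obtain ⟨n, a, ha, hna⟩ := laurent_unit_structure (hU.map (lmap π))
    rw [← single_eq_C_mul_T] at hna
    have hcoeff : ∀ k, (if k ∈ Finset.Icc l r then π (lam k) else 0)
        = (if n = k then a else 0) := by
      intro k
      have h1 : (lmap π F).coeff k = if k ∈ Finset.Icc l r then π (lam k) else 0 := by
        rw [hψF, AddMonoidAlgebra.coeff_sum, Finsupp.finset_sum_apply]
        simp only [AddMonoidAlgebra.coeff_single]
        rw [Finset.sum_congr rfl fun i _ => Finsupp.single_apply]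
        exact Finset.sum_ite_eq' _ _ _
      have h2 : (lmap π F).coeff k = if n = k then a else 0 := by
        rw [hna, AddMonoidAlgebra.coeff_single, Finsupp.single_apply]
      rw [← h1, h2]
    have hn_mem : n ∈ Finset.Icc l r := by
      by_contra hn
      have := hcoeff n
      rw [if_neg hn, if_pos rfl] at this
      exact ha this.symm
    have hπn : π (lam n) = a := by
      have := hcoeff n
      rwa [if_pos hn_mem, if_pos rfl] at this
    have hthird : ∀ i ∈ Finset.Icc l r, i ≠ n → π (lam i) = 0 := by
      intro i hi hin
      have := hcoeff i
      rwa [if_pos hi, if_neg (fun hni => hin hni.symm)] at this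
    refine ⟨n, ⟨hn_mem, ?_, hthird⟩, ?_⟩
    · rw [hπn]; exact isUnit_iff_ne_zero.mpr ha
    · rintro y ⟨hy, hyu, -⟩
      by_contra hyn
      rw [hthird y hy hyn] at hyu
      exact (not_isUnit_zero hyu : False)
  · -- backward direction
    intro h
    classical
    have hfact : ∀ q : {x // x ∈ m.primeFactors}, Fact (Nat.Prime q.1) :=
      fun q => ⟨Nat.prime_of_mem_primeFactors q.2⟩
    let j : {x // x ∈ m.primeFactors} → ℤ := fun q => (h q.1 q.2).choose
    have hj1 : ∀ q, j q ∈ Finset.Icc l r := fun q => (h q.1 q.2).choose_spec.1.1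
    have hj2 : ∀ q, IsUnit
        (ZMod.castHom (Nat.dvd_of_mem_primeFactors q.2) (ZMod q.1) (lam (j q))) :=
      fun q => (h q.1 q.2).choose_spec.1.2.1
    have hj3 : ∀ q, ∀ i ∈ Finset.Icc l r, i ≠ j q →
        ZMod.castHom (Nat.dvd_of_mem_primeFactors q.2) (ZMod q.1) (lam i) = 0 :=
      fun q => (h q.1 q.2).choose_spec.1.2.2
    let c : (q : {x // x ∈ m.primeFactors}) → ZMod q.1 := fun q => ↑(hj2 q).unit⁻¹
    let b : {x // x ∈ m.primeFactors} → ZMod m := fun q => ((c q).val : ZMod m)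
    let ε : {x // x ∈ m.primeFactors} → ZMod m :=
      fun q => ((m / q.1 ^ m.factorization q.1 : ℕ) : ZMod m) ^ (q.1 - 1)
    set G : LaurentPolynomial (ZMod m) :=
      ∑ q ∈ m.primeFactors.attach, AddMonoidAlgebra.single (-(j q)) (ε q * b q) with hG
    have main : ∀ q₀ : {x // x ∈ m.primeFactors},
        lmap (ZMod.castHom (Nat.dvd_of_mem_primeFactors q₀.2) (ZMod q₀.1)) (F * G) = 1 := by
      intro q₀
      haveI := hfact q₀
      set π := ZMod.castHom (Nat.dvd_of_mem_primeFactors q₀.2) (ZMod q₀.1) with hπdef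
      have hψF : lmap π F = AddMonoidAlgebra.single (j q₀) (π (lam (j q₀))) := by
        rw [hF, map_sum]
        rw [Finset.sum_congr rfl fun i (_ : i ∈ Finset.Icc l r) =>
          (by rw [lmap_C_mul_T, single_eq_C_mul_T] :
            lmap π (LaurentPolynomial.C (lam i) * T i) = AddMonoidAlgebra.single i (π (lam i)))]
        rw [Finset.sum_eq_single (j q₀)]
        · intro i hi hne
          rw [hj3 q₀ i hi hne, AddMonoidAlgebra.single_zero]
        · intro hne; exact absurd (hj1 q₀) hne
      have hεne : ∀ q : {x // x ∈ m.primeFactors}, q ≠ q₀ → π (ε q) = 0 := by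
        intro q hne
        have hq := (hfact q).out
        have hp := (hfact q₀).out
        have hpq : q₀.1 ≠ q.1 := fun hcon => hne (Subtype.ext hcon.symm)
        have hdvd : q₀.1 ∣ m / q.1 ^ m.factorization q.1 := by
          have hsplit := Nat.ordProj_mul_ordCompl_eq_self m q.1
          have hdm : q₀.1 ∣ q.1 ^ m.factorization q.1 * (m / q.1 ^ m.factorization q.1) := by
            rw [hsplit]; exact Nat.dvd_of_mem_primeFactors q₀.2
          rcases (Nat.Prime.dvd_mul hp).mp hdm with hd | hd
          · exact absurd ((Nat.prime_dvd_prime_iff_eq hp hq).mp (hp.dvd_of_dvd_pow hd)) hpq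
          · exact hd
        show π (((m / q.1 ^ m.factorization q.1 : ℕ) : ZMod m) ^ (q.1 - 1)) = 0
        rw [map_pow, map_natCast, (ZMod.natCast_eq_zero_iff _ _).mpr hdvd,
          zero_pow (by have := hq.two_le; omega)]
      have hεq₀ : π (ε q₀) = 1 := by
        have hp := (hfact q₀).out
        have hndvd : ¬ q₀.1 ∣ m / q₀.1 ^ m.factorization q₀.1 := by
          intro hd
          apply Nat.pow_succ_factorization_not_dvd hm0 hp
          have hsplit := Nat.ordProj_mul_ordCompl_eq_self m q₀.1
          calc q₀.1 ^ (m.factorization q₀.1 + 1)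
              = q₀.1 ^ m.factorization q₀.1 * q₀.1 := by rw [pow_succ]
            _ ∣ q₀.1 ^ m.factorization q₀.1 * (m / q₀.1 ^ m.factorization q₀.1) :=
              mul_dvd_mul_left _ hd
            _ = m := hsplit
        show π (((m / q₀.1 ^ m.factorization q₀.1 : ℕ) : ZMod m) ^ (q₀.1 - 1)) = 1
        rw [map_pow, map_natCast]
        exact ZMod.pow_card_sub_one_eq_one
          (fun h0 => hndvd ((ZMod.natCast_eq_zero_iff _ _).mp h0))
      have hbq₀ : π (b q₀) = c q₀ := by
        show π (((c q₀).val : ℕ) : ZMod m) = c q₀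
        rw [map_natCast]
        exact ZMod.natCast_rightInverse _
      have hψG : lmap π G = AddMonoidAlgebra.single (-(j q₀)) (c q₀) := by
        rw [hG, map_sum]
        rw [Finset.sum_congr rfl fun q (_ : q ∈ m.primeFactors.attach) =>
          lmap_single π (-(j q)) (ε q * b q)]
        rw [Finset.sum_eq_single q₀]
        · rw [map_mul, hεq₀, hbq₀, one_mul]
        · intro q _ hne
          rw [map_mul, hεne q hne, zero_mul, AddMonoidAlgebra.single_zero]
        · intro hne; exact absurd (Finset.mem_attach _ _) hne
      rw [map_mul, hψF, hψG, AddMonoidAlgebra.single_mul_single, add_neg_cancel]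
      have : π (lam (j q₀)) * c q₀ = 1 := (hj2 q₀).mul_val_inv
      rw [this, ← AddMonoidAlgebra.one_def]
    have hnil : IsNilpotent (F * G - 1) := by
      apply laurent_nilpotent
      intro k
      apply zmod_nilpotent hm
      intro p hp
      haveI : Fact p.Prime := ⟨Nat.prime_of_mem_primeFactors hp⟩
      have h0 : lmap (ZMod.castHom (Nat.dvd_of_mem_primeFactors hp) (ZMod p)) (F * G - 1)
          = 0 := by
        rw [map_sub, map_one, main ⟨p, hp⟩, sub_self]
      have h1 : ZMod.castHom (Nat.dvd_of_mem_primeFactors hp) (ZMod p) ((F * G - 1).coeff k)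
          = 0 := by
        rw [← lmap_apply, h0]; rfl
      rw [ZMod.natCast_val]
      rwa [ZMod.castHom_apply] at h1
    have hu : IsUnit (F * G) := by
      have := hnil.isUnit_one_add
      rwa [add_sub_cancel] at this
    exact isUnit_of_mul_isUnit_left hu
end

section
/- In Z_4 (= Z_{2^2}), the Laurent polynomial F(X) = 2(X + X^2 + X^3) + X^4 associated with the local rule f(x_1,x_2,x_3,x_4) = 2(x_1+x_2+x_3) + x_4 (mod 4) is invertible, and its inverse is G(X) = 2(X^{-7} + X^{-6} + X^{-5}) + X^{-4}, i.e., F(X)·G(X) = 1 in (Z_4)[X, X^{-1}]. -/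
open LaurentPolynomial

/-- In `(Z_4)[X, X^{-1}]`, `F(X) = 2X + 2X² + 2X³ + X⁴` is invertible with inverse
`G(X) = 2X^{-7} + 2X^{-6} + 2X^{-5} + X^{-4}`. -/
theorem example_invertible_CA
    (F G : LaurentPolynomial (ZMod 4))
    (hF : F = LaurentPolynomial.C 2 * T 1 + LaurentPolynomial.C 2 * T 2 +
      LaurentPolynomial.C 2 * T 3 + T 4)
    (hG : G = LaurentPolynomial.C 2 * T (-7) + LaurentPolynomial.C 2 * T (-6) +
      LaurentPolynomial.C 2 * T (-5) + T (-4)) :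
    IsUnit F ∧ F * G = 1 := by
  have h : F * G = 1 := by
    subst hF hG
    have h2 : (LaurentPolynomial.C (2 : ZMod 4)) * LaurentPolynomial.C 2 = 0 := by
      rw [← map_mul]; norm_num; rw [show (4:ZMod 4) = 0 by decide, map_zero]
    ring_nf
    simp only [← T_add, ← map_mul]
    norm_num
    have h4 : (LaurentPolynomial.C (2:ZMod 4)) + LaurentPolynomial.C 2 = 0 := by
      rw [← map_add]; rw [show (2:ZMod 4)+2 = 0 by decide, map_zero]
    linear_combination (T (-3) + T (-2) + T (-1) : LaurentPolynomial (ZMod 4)) * h4 +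
      (T (-6) + 2*T (-5) + 3*T (-4) + 2*T (-3) + T (-2) : LaurentPolynomial (ZMod 4)) * h2
    
  exact ⟨IsUnit.of_mul_eq_one G h, h⟩
end
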